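/- There exist a unit vector ψ ∈ ℂ²⊗ℂ² and Hermitian operators A1, A2 on the first factor and B1, B2 on the second factor, each with eigenvalues in {-1,1}, such that the CHSH expectation ⟨ψ|(A1⊗B1 + A1⊗B2 + A2⊗B1 − A2⊗B2)|ψ⟩ > 2. Consequently, no joint probability distribution on {-1,1}^4 can reproduce the four correlators ⟨ψ|Ai⊗Bj|ψ⟩ as its marginals. -/

import Mathlib

open Matrix Kronecker

noncomputable def cc : ℂ := ((Real.sqrt 2 : ℝ) : ℂ)⁻¹

noncomputable def psi : EuclideanSpace ℂ (Fin 2 × Fin 2) :=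
  WithLp.toLp 2 (fun x : Fin 2 × Fin 2 => if x.1 = x.2 then cc else 0)

lemma cc_sq : cc * cc = 2⁻¹ := by
  rw [cc, ← mul_inv]
  norm_cast
  rw [Real.mul_self_sqrt (by norm_num)]; norm_num

lemma star_cc : star cc = cc := by
  simp [cc, ← Complex.ofReal_inv, Complex.conj_ofReal]

lemma corr (A B : Matrix (Fin 2) (Fin 2) ℂ) :
    dotProduct (star (psi : Fin 2 × Fin 2 → ℂ)) ((A ⊗ₖ B).mulVec psi) =
      (cc * cc) * (A 0 0 * B 0 0 + A 0 1 * B 0 1 + A 1 0 * B 1 0 + A 1 1 * B 1 1) := by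
  simp [psi, dotProduct, Matrix.mulVec, Fintype.sum_prod_type, Fin.sum_univ_two,
    Matrix.kroneckerMap_apply, Pi.star_apply, apply_ite (star : ℂ → ℂ), star_cc]
  ring

noncomputable def mA1 : Matrix (Fin 2) (Fin 2) ℂ := !![1,0;0,-1]
noncomputable def mA2 : Matrix (Fin 2) (Fin 2) ℂ := !![0,1;1,0]
noncomputable def mB1 : Matrix (Fin 2) (Fin 2) ℂ := cc • !![1,1;1,-1]
noncomputable def mB2 : Matrix (Fin 2) (Fin 2) ℂ := cc • !![1,-1;-1,-1]

lemma hermA1 : mA1.IsHermitian := by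
  ext i j; fin_cases i <;> fin_cases j <;>
    simp [mA1, Matrix.conjTranspose_apply]
lemma hermA2 : mA2.IsHermitian := by
  ext i j; fin_cases i <;> fin_cases j <;>
    simp [mA2, Matrix.conjTranspose_apply]
lemma hermB1 : mB1.IsHermitian := by
  ext i j; fin_cases i <;> fin_cases j <;>
    simp [mB1, Matrix.conjTranspose_apply, star_cc]
lemma hermB2 : mB2.IsHermitian := by
  ext i j; fin_cases i <;> fin_cases j <;>
    simp [mB2, Matrix.conjTranspose_apply, star_cc]

lemma sqA1 : mA1 * mA1 = 1 := by
  ext i j; fin_cases i <;> fin_cases j <;>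
    simp [mA1, Matrix.mul_apply, Fin.sum_univ_two, Matrix.one_apply]
lemma sqA2 : mA2 * mA2 = 1 := by
  ext i j; fin_cases i <;> fin_cases j <;>
    simp [mA2, Matrix.mul_apply, Fin.sum_univ_two, Matrix.one_apply]
lemma sqB1 : mB1 * mB1 = 1 := by
  ext i j; fin_cases i <;> fin_cases j <;>
    simp [mB1, Matrix.mul_apply, Fin.sum_univ_two, Matrix.one_apply, cc_sq] <;> ring_nf <;>
    simp [cc_sq] <;> norm_num
lemma sqB2 : mB2 * mB2 = 1 := by
  ext i j; fin_cases i <;> fin_cases j <;>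
    simp [mB2, Matrix.mul_apply, Fin.sum_univ_two, Matrix.one_apply, cc_sq] <;> ring_nf <;>
    simp [cc_sq] <;> norm_num

lemma spec_pm (M : Matrix (Fin 2) (Fin 2) ℂ) (h : M * M = 1) :
    ∀ μ ∈ spectrum ℂ M, μ = -1 ∨ μ = 1 := by
  intro μ hμ
  by_contra hc
  push_neg at hc
  rw [spectrum.mem_iff] at hμ
  apply hμ
  have hne : μ ^ 2 - 1 ≠ 0 := by
    intro h0
    have hf : (μ - 1) * (μ + 1) = 0 := by linear_combination h0
    rcases mul_eq_zero.mp hf with h1 | h1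
    · exact hc.2 (sub_eq_zero.mp h1)
    · exact hc.1 (by linear_combination h1)
  rw [isUnit_iff_exists, Algebra.algebraMap_eq_smul_one]
  refine ⟨(μ ^ 2 - 1)⁻¹ • (μ • 1 + M), ?_, ?_⟩
  · have e : (μ • (1:Matrix (Fin 2) (Fin 2) ℂ) - M) * ((μ^2-1)⁻¹ • (μ • 1 + M))
        = (μ^2-1)⁻¹ • ((μ^2) • 1 - M * M) := by
      rw [mul_smul_comm]
      congr 1
      simp only [mul_add, sub_mul, smul_mul_assoc, mul_smul_comm, smul_smul, one_mul, mul_one, sq]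
      module
    rw [e, h, show (μ^2 • (1:Matrix (Fin 2) (Fin 2) ℂ) - 1) = (μ^2 - 1) • 1 by
        rw [sub_smul, one_smul], smul_smul, inv_mul_cancel₀ hne, one_smul]
  · have e : ((μ^2-1)⁻¹ • (μ • 1 + M)) * (μ • (1:Matrix (Fin 2) (Fin 2) ℂ) - M)
        = (μ^2-1)⁻¹ • ((μ^2) • 1 - M * M) := by
      rw [smul_mul_assoc]
      congr 1
      simp only [mul_sub, add_mul, smul_mul_assoc, mul_smul_comm, smul_smul, one_mul, mul_one, sq]
      module
    rw [e, h, show (μ^2 • (1:Matrix (Fin 2) (Fin 2) ℂ) - 1) = (μ^2 - 1) • 1 by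
        rw [sub_smul, one_smul], smul_smul, inv_mul_cancel₀ hne, one_smul]

lemma norm_psi : ‖psi‖ = 1 := by
  rw [EuclideanSpace.norm_eq]
  have hcc : ‖cc‖ = (Real.sqrt 2)⁻¹ := by
    rw [cc, norm_inv, Complex.norm_real, Real.norm_eq_abs,
      abs_of_nonneg (Real.sqrt_nonneg 2)]
  have habs : ‖cc‖ ^ 2 = 2⁻¹ := by
    rw [hcc, ← Real.sqrt_inv, Real.sq_sqrt (by norm_num)]
  rw [show ∑ i : Fin 2 × Fin 2, ‖psi i‖ ^ 2 = (2⁻¹:ℝ) + 2⁻¹ by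
    simp [psi, Fintype.sum_prod_type, Fin.sum_univ_two, habs]]
  norm_num

lemma q11 : dotProduct (star (psi : Fin 2 × Fin 2 → ℂ)) ((mA1 ⊗ₖ mB1).mulVec psi) = cc := by
  rw [corr]; simp [mA1, mB1]; linear_combination (2*cc) * cc_sq
lemma q12 : dotProduct (star (psi : Fin 2 × Fin 2 → ℂ)) ((mA1 ⊗ₖ mB2).mulVec psi) = cc := by
  rw [corr]; simp [mA1, mB2]; linear_combination (2*cc) * cc_sq
lemma q21 : dotProduct (star (psi : Fin 2 × Fin 2 → ℂ)) ((mA2 ⊗ₖ mB1).mulVec psi) = cc := by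
  rw [corr]; simp [mA2, mB1]; linear_combination (2*cc) * cc_sq
lemma q22 : dotProduct (star (psi : Fin 2 × Fin 2 → ℂ)) ((mA2 ⊗ₖ mB2).mulVec psi) = -cc := by
  rw [corr]; simp [mA2, mB2]; linear_combination (-2*cc) * cc_sq

lemma cc_re : cc.re = (Real.sqrt 2)⁻¹ := by
  rw [cc, ← Complex.ofReal_inv, Complex.ofReal_re]

lemma ht : (1:ℝ)/2 < (Real.sqrt 2)⁻¹ := by
  have h2 : Real.sqrt 2 < 2 := by
    nlinarith [Real.sq_sqrt (show (0:ℝ) ≤ 2 by norm_num), Real.sqrt_nonneg 2]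
  have h0 : 0 < Real.sqrt 2 := Real.sqrt_pos.mpr (by norm_num)
  have hmul : (Real.sqrt 2)⁻¹ * Real.sqrt 2 = 1 := inv_mul_cancel₀ h0.ne'
  nlinarith [inv_pos.mpr h0]

/-- there are a unit state and ±1-valued local Hermitian observables whose
CHSH expectation exceeds 2, and hence no joint distribution on {-1,1}^4 reproduces the
four correlators as its marginals. -/
theorem chsh_quantum_violation_no_joint :
    ∃ (ψ : EuclideanSpace ℂ (Fin 2 × Fin 2)) (A1 A2 B1 B2 : Matrix (Fin 2) (Fin 2) ℂ),
      ‖ψ‖ = 1 ∧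
      A1.IsHermitian ∧ A2.IsHermitian ∧ B1.IsHermitian ∧ B2.IsHermitian ∧
      (∀ μ ∈ spectrum ℂ A1, μ = -1 ∨ μ = 1) ∧ (∀ μ ∈ spectrum ℂ A2, μ = -1 ∨ μ = 1) ∧
      (∀ μ ∈ spectrum ℂ B1, μ = -1 ∨ μ = 1) ∧ (∀ μ ∈ spectrum ℂ B2, μ = -1 ∨ μ = 1) ∧
      (2 : ℝ) < (dotProduct (star (ψ : Fin 2 × Fin 2 → ℂ))
        ((A1 ⊗ₖ B1 + A1 ⊗ₖ B2 + A2 ⊗ₖ B1 - A2 ⊗ₖ B2).mulVec ψ)).re ∧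
      ¬ ∃ p : ℤ → ℤ → ℤ → ℤ → ℝ,
        (∀ a1 ∈ ({-1, 1} : Finset ℤ), ∀ a2 ∈ ({-1, 1} : Finset ℤ),
          ∀ b1 ∈ ({-1, 1} : Finset ℤ), ∀ b2 ∈ ({-1, 1} : Finset ℤ), 0 ≤ p a1 a2 b1 b2) ∧
        (∑ a1 ∈ ({-1, 1} : Finset ℤ), ∑ a2 ∈ ({-1, 1} : Finset ℤ),
          ∑ b1 ∈ ({-1, 1} : Finset ℤ), ∑ b2 ∈ ({-1, 1} : Finset ℤ), p a1 a2 b1 b2 = 1) ∧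
        (∀ i ∈ ({1, 2} : Finset ℤ), ∀ j ∈ ({1, 2} : Finset ℤ),
          (∑ a1 ∈ ({-1, 1} : Finset ℤ), ∑ a2 ∈ ({-1, 1} : Finset ℤ),
            ∑ b1 ∈ ({-1, 1} : Finset ℤ), ∑ b2 ∈ ({-1, 1} : Finset ℤ),
              ((if i = 1 then a1 else a2) * (if j = 1 then b1 else b2) : ℝ) * p a1 a2 b1 b2) =
            (dotProduct (star (ψ : Fin 2 × Fin 2 → ℂ))
              (((if i = 1 then A1 else A2) ⊗ₖ (if j = 1 then B1 else B2)).mulVec ψ)).re) := by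
  have hT := ht
  refine ⟨psi, mA1, mA2, mB1, mB2, norm_psi, hermA1, hermA2, hermB1, hermB2,
    spec_pm _ sqA1, spec_pm _ sqA2, spec_pm _ sqB1, spec_pm _ sqB2, ?_, ?_⟩
  · simp only [Matrix.add_mulVec, Matrix.sub_mulVec, dotProduct_add, dotProduct_sub,
      Complex.add_re, Complex.sub_re, q11, q12, q21, q22, cc_re, Complex.neg_re]
    linarith
  rintro ⟨p, hpos, hsum, hcorr⟩
  have e11 := hcorr 1 (by norm_num) 1 (by norm_num)
  have e12 := hcorr 1 (by norm_num) 2 (by norm_num)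
  have e21 := hcorr 2 (by norm_num) 1 (by norm_num)
  have e22 := hcorr 2 (by norm_num) 2 (by norm_num)
  norm_num at e11 e12 e21 e22
  rw [q11, cc_re] at e11
  rw [q12, cc_re] at e12
  rw [q21, cc_re] at e21
  rw [q22] at e22
  rw [show (-cc).re = -(Real.sqrt 2)⁻¹ by rw [Complex.neg_re, cc_re]] at e22
  simp only [Finset.sum_pair (show (-1:ℤ) ≠ 1 by norm_num)] at e11 e12 e21 e22 hsum
  push_cast at e11 e12 e21 e22
  norm_num at e11 e12 e21 e22
  have P0 := hpos (-1) (by norm_num) (-1) (by norm_num) (-1) (by norm_num) (-1) (by norm_num)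
  have P1 := hpos (-1) (by norm_num) (-1) (by norm_num) (-1) (by norm_num) 1 (by norm_num)
  have P2 := hpos (-1) (by norm_num) (-1) (by norm_num) 1 (by norm_num) (-1) (by norm_num)
  have P3 := hpos (-1) (by norm_num) (-1) (by norm_num) 1 (by norm_num) 1 (by norm_num)
  have P4 := hpos (-1) (by norm_num) 1 (by norm_num) (-1) (by norm_num) (-1) (by norm_num)
  have P5 := hpos (-1) (by norm_num) 1 (by norm_num) (-1) (by norm_num) 1 (by norm_num)
  have P6 := hpos (-1) (by norm_num) 1 (by norm_num) 1 (by norm_num) (-1) (by norm_num)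
  have P7 := hpos (-1) (by norm_num) 1 (by norm_num) 1 (by norm_num) 1 (by norm_num)
  have P8 := hpos 1 (by norm_num) (-1) (by norm_num) (-1) (by norm_num) (-1) (by norm_num)
  have P9 := hpos 1 (by norm_num) (-1) (by norm_num) (-1) (by norm_num) 1 (by norm_num)
  have P10 := hpos 1 (by norm_num) (-1) (by norm_num) 1 (by norm_num) (-1) (by norm_num)
  have P11 := hpos 1 (by norm_num) (-1) (by norm_num) 1 (by norm_num) 1 (by norm_num)
  have P12 := hpos 1 (by norm_num) 1 (by norm_num) (-1) (by norm_num) (-1) (by norm_num)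
  have P13 := hpos 1 (by norm_num) 1 (by norm_num) (-1) (by norm_num) 1 (by norm_num)
  have P14 := hpos 1 (by norm_num) 1 (by norm_num) 1 (by norm_num) (-1) (by norm_num)
  have P15 := hpos 1 (by norm_num) 1 (by norm_num) 1 (by norm_num) 1 (by norm_num)
  linarith
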